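/- For every nonnegative integer n, S_n^{(r,k)}(x|a_1,…,a_r) = Σ_{m=0}^n ( Σ_{l=m}^n S_2(l,m) C(n,l) S_{n−l}^{(r,k)}(a_1,…,a_r) ) (x)_m, as an identity of polynomials in x, where (x)_m = x(x−1)⋯(x−m+1) is the falling factorial with (x)_0 = 1. -/

import Mathlib

open PowerSeries Finset

/-- The formal power series `e^{c·t}` over a commutative `ℚ`-algebra `R`. -/
noncomputable def expS {R : Type*} [CommRing R] [Algebra ℚ R] (c : R) : PowerSeries R :=
  PowerSeries.rescale c (PowerSeries.exp R)

/-- The formal power series `Li_k(1 - e^{-t})` over `ℂ`, where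
`Li_k(z) = ∑_{m ≥ 1} z^m / m^k` is the `k`-th polylogarithm.  Since `1 - e^{-t}`
has order `1`, the coefficient of `t^n` only involves the terms with `1 ≤ m ≤ n`. -/
noncomputable def Lik (k : ℤ) : PowerSeries ℂ :=
  PowerSeries.mk fun n => ∑ m ∈ Finset.Icc 1 n,
    ((m : ℂ) ^ k)⁻¹ * PowerSeries.coeff n ((1 - expS (-1 : ℂ)) ^ m)

/-- The exponential generating function `∑_n p n · t^n / n!` of a sequence of
complex polynomials. -/
noncomputable def egf (p : ℕ → Polynomial ℂ) : PowerSeries (Polynomial ℂ) :=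
  PowerSeries.mk fun n => ((n.factorial : ℂ))⁻¹ • p n

/-! ### Auxiliary lemmas -/

lemma coeff_expS {R : Type*} [CommRing R] [Algebra ℚ R] (c : R) (n : ℕ) :
    PowerSeries.coeff n (expS c) = c ^ n * algebraMap ℚ R (1 / n.factorial) := by
  simp [expS, coeff_rescale, PowerSeries.coeff_exp]

lemma expS_map {R S : Type*} [CommRing R] [CommRing S] [Algebra ℚ R] [Algebra ℚ S]
    (f : R →+* S) (hf : ∀ q : ℚ, f (algebraMap ℚ R q) = algebraMap ℚ S q) (c : R) :
    PowerSeries.map f (expS c) = expS (f c) := by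
  ext n
  simp [coeff_expS, PowerSeries.coeff_map, hf]

lemma expS_zero {R : Type*} [CommRing R] [Algebra ℚ R] : expS (0 : R) = 1 := by
  simp [expS, rescale_zero, PowerSeries.constantCoeff_exp]

lemma prod_eq_descPochhammer (m : ℕ) :
    ∏ i ∈ Finset.range m, (Polynomial.X - Polynomial.C (i : ℂ)) = descPochhammer ℂ m := by
  induction m with
  | zero => simp
  | succ m ih => rw [Finset.prod_range_succ, ih, descPochhammer_succ_right]; simp

section
variable (S2 : ℕ → ℕ → ℂ)
  (hS2 : ∀ m, (PowerSeries.exp ℂ - 1) ^ m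
      = (m.factorial : ℂ) • PowerSeries.mk (fun l => S2 l m / (l.factorial : ℂ)))
include hS2

lemma S2_zero {n m : ℕ} (h : n < m) : S2 n m = 0 := by
  have hd : (PowerSeries.X : PowerSeries ℂ) ^ m ∣ (PowerSeries.exp ℂ - 1) ^ m := by
    apply pow_dvd_pow_of_dvd
    rw [PowerSeries.X_dvd_iff]
    simp [PowerSeries.constantCoeff_exp]
  have h0 : PowerSeries.coeff n ((PowerSeries.exp ℂ - 1) ^ m) = 0 :=
    (PowerSeries.X_pow_dvd_iff.mp hd) n h
  rw [hS2 m] at h0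
  simp only [map_smul, PowerSeries.coeff_mk, smul_eq_mul] at h0
  have h1 : (m.factorial : ℂ) ≠ 0 := Nat.cast_ne_zero.mpr m.factorial_ne_zero
  have h2 : (n.factorial : ℂ) ≠ 0 := Nat.cast_ne_zero.mpr n.factorial_ne_zero
  field_simp at h0
  exact (mul_eq_zero.mp (h0.trans (mul_zero _))).resolve_left h1

lemma eval_id (N n : ℕ) :
    (N : ℂ) ^ n = ∑ m ∈ Finset.range (n + 1), S2 n m * (N.descFactorial m : ℂ) := by
  have hn : (n.factorial : ℂ) ≠ 0 := Nat.cast_ne_zero.mpr n.factorial_ne_zero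
  have h1 : (PowerSeries.exp ℂ) ^ N
      = ∑ m ∈ Finset.range (N + 1), (PowerSeries.exp ℂ - 1) ^ m * (N.choose m : PowerSeries ℂ) := by
    conv_lhs => rw [show PowerSeries.exp ℂ = (PowerSeries.exp ℂ - 1) + 1 by ring]
    rw [add_pow]
    simp
  have h3 : ∀ m, PowerSeries.coeff n ((PowerSeries.exp ℂ - 1) ^ m * (N.choose m : PowerSeries ℂ))
      = (m.factorial : ℂ) * (S2 n m / n.factorial) * (N.choose m : ℂ) := by
    intro m
    rw [hS2, ← map_natCast (PowerSeries.C) (N.choose m), PowerSeries.coeff_mul_C]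
    simp
  have h2 := congrArg (PowerSeries.coeff n) h1
  rw [PowerSeries.exp_pow_eq_rescale_exp, PowerSeries.coeff_rescale, PowerSeries.coeff_exp,
    map_sum] at h2
  simp only [h3] at h2
  have halg : algebraMap ℚ ℂ (1 / (n.factorial : ℚ)) = ((n.factorial : ℂ))⁻¹ := by
    push_cast [eq_ratCast, Rat.cast_div]
    simp
  rw [halg] at h2
  have h4 : (N : ℂ) ^ n = ∑ m ∈ Finset.range (N + 1), S2 n m * (N.descFactorial m : ℂ) := by
    have := congrArg (fun z => z * (n.factorial : ℂ)) h2
    simp only [Finset.sum_mul] at this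
    rw [inv_mul_cancel_right₀ hn] at this
    rw [this]
    refine Finset.sum_congr rfl fun m _ => ?_
    rw [Nat.descFactorial_eq_factorial_mul_choose]
    push_cast
    field_simp
  rw [h4]
  have hsub1 : Finset.range (N + 1) ⊆ Finset.range (N + n + 1) := by
    apply Finset.range_subset_range.mpr; omega
  have hsub2 : Finset.range (n + 1) ⊆ Finset.range (N + n + 1) := by
    apply Finset.range_subset_range.mpr; omega
  rw [Finset.sum_subset hsub1, Finset.sum_subset hsub2]
  · intro m _ hm
    rw [S2_zero S2 hS2 (by simp at hm ⊢; omega)]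
    ring
  · intro m _ hm
    rw [Nat.descFactorial_eq_zero_iff_lt.mpr (by simp at hm ⊢; omega)]
    simp

lemma stirling_poly (n : ℕ) :
    (Polynomial.X : Polynomial ℂ) ^ n
      = ∑ m ∈ Finset.range (n + 1), Polynomial.C (S2 n m) * descPochhammer ℂ m := by
  have h : (Polynomial.X : Polynomial ℂ) ^ n
      - ∑ m ∈ Finset.range (n + 1), Polynomial.C (S2 n m) * descPochhammer ℂ m = 0 := by
    apply Polynomial.eq_zero_of_infinite_isRoot
    have hinf : (Set.range ((↑) : ℕ → ℂ)).Infinite :=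
      Set.infinite_range_of_injective Nat.cast_injective
    apply hinf.mono
    rintro _ ⟨N, rfl⟩
    simp only [Set.mem_setOf_eq, Polynomial.IsRoot, Polynomial.eval_sub, Polynomial.eval_pow,
      Polynomial.eval_X, Polynomial.eval_finset_sum, Polynomial.eval_mul, Polynomial.eval_C,
      descPochhammer_eval_eq_descFactorial]
    rw [← eval_id S2 hS2 N n]
    ring
  exact sub_eq_zero.mp h

end

theorem stmt9 (r : ℕ) (hr : 0 < r) (k : ℤ) (a : Fin r → ℂ) (ha : ∀ j, a j ≠ 0)
    (S : ℕ → Polynomial ℂ) (S2 : ℕ → ℕ → ℂ)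
    -- `S n` is the mixed-type polynomial `S_n^{(r,k)}(x|a_1,…,a_r)`:
    (hS : (PowerSeries.X : PowerSeries (Polynomial ℂ)) ^ r
        * PowerSeries.map Polynomial.C (Lik k) * expS Polynomial.X
        = (∏ j, (expS (Polynomial.C (a j)) - 1)) * (1 - expS (-1 : Polynomial ℂ)) * egf S)
    -- `S2 l m` is the Stirling number of the second kind, defined by
    -- `(e^t - 1)^m = m! ∑_{l ≥ m} S2(l,m) t^l / l!`:
    (hS2 : ∀ m, (PowerSeries.exp ℂ - 1) ^ m
        = (m.factorial : ℂ) • PowerSeries.mk (fun l => S2 l m / (l.factorial : ℂ)))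
    (n : ℕ) :
    S n = ∑ m ∈ Finset.range (n + 1),
      Polynomial.C (∑ l ∈ Finset.Icc m n, S2 l m * (n.choose l : ℂ) * (S (n - l)).eval 0)
        * ∏ i ∈ Finset.range m, (Polynomial.X - Polynomial.C (i : ℂ)) := by
  classical
  set b : ℕ → ℂ := fun n => (S n).eval 0 with hb
  set Bc : PowerSeries ℂ := PowerSeries.mk fun n => ((n.factorial : ℂ))⁻¹ * b n with hBc
  set φ : Polynomial ℂ →+* ℂ := Polynomial.evalRingHom 0 with hφdef
  have hφ : ∀ q : ℚ, φ (algebraMap ℚ (Polynomial ℂ) q) = algebraMap ℚ ℂ q := by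
    intro q
    simp [hφdef, Polynomial.algebraMap_apply]
  have hCalg : ∀ q : ℚ, (Polynomial.C : ℂ →+* Polynomial ℂ) (algebraMap ℚ ℂ q)
      = algebraMap ℚ (Polynomial ℂ) q := by
    intro q
    simp [Polynomial.algebraMap_apply]
  set D : PowerSeries (Polynomial ℂ) :=
    (∏ j, (expS (Polynomial.C (a j)) - 1)) * (1 - expS (-1 : Polynomial ℂ)) with hD
  -- Step 1: map `hS` under evaluation at 0.
  have hmapS : PowerSeries.map φ (egf S) = Bc := by
    ext m
    simp [egf, hBc, PowerSeries.coeff_map, hφdef, Polynomial.eval_smul, hb, smul_eq_mul]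
  have hmapLik : PowerSeries.map φ (PowerSeries.map Polynomial.C (Lik k)) = Lik k := by
    ext m
    simp [PowerSeries.coeff_map, hφdef]
  have h0 : (PowerSeries.X : PowerSeries ℂ) ^ r * Lik k
      = ((∏ j, (expS (a j) - 1)) * (1 - expS (-1 : ℂ))) * Bc := by
    have hX0 : φ (Polynomial.X) = 0 := by simp [hφdef]
    have hCa : ∀ j : Fin r, φ (Polynomial.C (a j)) = a j := by intro j; simp [hφdef]
    have hneg : φ (-1 : Polynomial ℂ) = -1 := by simp
    have := congrArg (PowerSeries.map φ) hS
    simp only [map_mul, map_pow, PowerSeries.map_X, hmapS, hmapLik, map_prod, map_sub, map_one,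
      expS_map φ hφ, hX0, hCa, hneg, expS_zero, mul_one, hD] at this
    rw [this]
  -- Step 2: map back via C and cancel D.
  have h1 : (PowerSeries.X : PowerSeries (Polynomial ℂ)) ^ r * PowerSeries.map Polynomial.C (Lik k)
      = D * PowerSeries.map Polynomial.C Bc := by
    have := congrArg (PowerSeries.map (Polynomial.C : ℂ →+* Polynomial ℂ)) h0
    simp only [map_mul, map_pow, PowerSeries.map_X, map_prod, map_sub, map_one,
      expS_map (Polynomial.C : ℂ →+* Polynomial ℂ) hCalg] at this
    rw [this, hD]
    simp
  have hDne : D ≠ 0 := by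
    rw [hD]
    apply mul_ne_zero
    · rw [Finset.prod_ne_zero_iff]
      intro j _ hzero
      have := congrArg (PowerSeries.coeff 1) hzero
      simp [coeff_expS, PowerSeries.coeff_one, Polynomial.algebraMap_apply] at this
      exact ha j this
    · intro hzero
      have := congrArg (PowerSeries.coeff 1) hzero
      simp [coeff_expS, PowerSeries.coeff_one, Polynomial.algebraMap_apply] at this
  have hegf : egf S = PowerSeries.map Polynomial.C Bc * expS Polynomial.X := by
    apply mul_left_cancel₀ hDne
    rw [← mul_assoc, ← h1]
    rw [hS]
  -- Step 3: extract coefficients.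
  have hn : ((n.factorial : ℂ)) ≠ 0 := Nat.cast_ne_zero.mpr n.factorial_ne_zero
  have hcoeff : S n = ∑ l ∈ Finset.range (n + 1),
      Polynomial.C ((n.choose l : ℂ) * b l) * Polynomial.X ^ (n - l) := by
    have e1 := congrArg (PowerSeries.coeff n) hegf
    rw [PowerSeries.coeff_mul, Finset.Nat.sum_antidiagonal_eq_sum_range_succ_mk] at e1
    simp only [PowerSeries.coeff_map, hBc, PowerSeries.coeff_mk, coeff_expS, egf] at e1
    have e2 := congrArg (fun p => (n.factorial : ℂ) • p) e1
    simp only [smul_smul, mul_inv_cancel₀ hn, one_smul, Finset.smul_sum] at e2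
    rw [e2]
    refine Finset.sum_congr rfl fun l hl => ?_
    have hln : l ≤ n := by simp at hl; omega
    have hl1 : ((l.factorial : ℂ)) ≠ 0 := Nat.cast_ne_zero.mpr l.factorial_ne_zero
    have hl2 : (((n - l).factorial : ℂ)) ≠ 0 := Nat.cast_ne_zero.mpr (n - l).factorial_ne_zero
    have halg : algebraMap ℚ (Polynomial ℂ) (1 / ((n - l).factorial : ℚ))
        = Polynomial.C ((((n - l).factorial : ℂ))⁻¹) := by
      rw [Polynomial.algebraMap_apply]
      congr 1
      push_cast [eq_ratCast, Rat.cast_div]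
      simp
    rw [halg, Nat.cast_choose ℂ hln]
    rw [Polynomial.smul_eq_C_mul]
    rw [map_mul, map_mul]
    have : ((Polynomial.C ((l.factorial : ℂ))⁻¹ * Polynomial.C (b l)) *
        (Polynomial.X ^ (n - l) * Polynomial.C ((((n - l).factorial : ℂ))⁻¹))) =
        Polynomial.C (((l.factorial : ℂ))⁻¹ * (((n - l).factorial : ℂ))⁻¹ * b l)
          * Polynomial.X ^ (n - l) := by
      simp only [map_mul]
      ring
    rw [this, ← mul_assoc, ← map_mul]
    rw [← map_mul]
    congr 1
    ring
  -- Step 4: substitute the Stirling expansion of X^(n-l) and reorganize.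
  simp only [prod_eq_descPochhammer]
  rw [hcoeff]
  have hexp : ∀ l ∈ Finset.range (n + 1),
      Polynomial.C ((n.choose l : ℂ) * b l) * Polynomial.X ^ (n - l)
      = ∑ m ∈ Finset.range (n + 1),
          Polynomial.C ((n.choose l : ℂ) * b l * S2 (n - l) m) * descPochhammer ℂ m := by
    intro l hl
    rw [stirling_poly S2 hS2 (n - l)]
    rw [Finset.mul_sum]
    have hsub : Finset.range (n - l + 1) ⊆ Finset.range (n + 1) := by
      apply Finset.range_subset_range.mpr; omega
    rw [← Finset.sum_subset hsub]
    · refine Finset.sum_congr rfl fun m _ => ?_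
      rw [← mul_assoc, ← map_mul]
    · intro m _ hm
      rw [S2_zero S2 hS2 (by simp at hm ⊢; omega)]
      simp
  rw [Finset.sum_congr rfl hexp, Finset.sum_comm]
  refine Finset.sum_congr rfl fun m hm => ?_
  rw [← Finset.sum_mul, ← map_sum]
  congr 2
  -- inner sums agree after the substitution l ↦ n - l
  have hmn : m ≤ n := by simp at hm; omega
  rw [← Finset.sum_range_reflect (fun l => (n.choose l : ℂ) * b l * S2 (n - l) m) (n + 1)]
  have hsub : Finset.Icc m n ⊆ Finset.range (n + 1) := by
    intro x hx; simp at hx ⊢; omega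
  rw [← Finset.sum_subset hsub]
  · refine Finset.sum_congr rfl fun l hl => ?_
    have hln : l ≤ n := by simp at hl; omega
    have h1 : n + 1 - 1 - l = n - l := by omega
    have h2 : n - (n - l) = l := by omega
    rw [h1, h2, Nat.choose_symm hln]
    ring
  · intro l hl hnot
    have hlm : l < m := by simp at hl hnot ⊢; omega
    have h1 : n + 1 - 1 - l = n - l := by omega
    have h2 : n - (n - l) = l := by simp at hl; omega
    rw [h1, h2, S2_zero S2 hS2 hlm]
    ring
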